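/- arXiv:1802.03669 — 5 statements merged into one kernel-verified Lean document; each statement's English description precedes it below -/
import Mathlib

section
/- (Lemma 1) In any environment with at least one country, for every strategy matrix U (not necessarily an equilibrium) there exists at least one country i that survives under U, i.e. σ_i(U) ≥ τ_i(U); it can never be the case that every country is unsafe. -/
open Finset

/-- A networked environment: friend sets, adversary sets and powers. -/
structure Env (n : ℕ) where
  F : Fin n → Finset (Fin n)
  A : Fin n → Finset (Fin n)
  p : Fin n → ℝ
  self_friend : ∀ i, i ∈ F i
  disj : ∀ i, Disjoint (F i) (A i)
  F_symm : ∀ i j, j ∈ F i ↔ i ∈ F j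
  A_symm : ∀ i j, j ∈ A i ↔ i ∈ A j
  p_nonneg : ∀ i, 0 ≤ p i

/-- `U` is a strategy matrix for environment `E`. -/
def IsStrat {n : ℕ} (E : Env n) (U : Fin n → Fin n → ℝ) : Prop :=
  (∀ i j, 0 ≤ U i j) ∧ (∀ i, ∑ j, U i j = E.p i) ∧
    (∀ i j, j ∉ E.F i → j ∉ E.A i → U i j = 0)

/-- Total support `σ_i(U)`. -/
def totalSupport {n : ℕ} (E : Env n) (U : Fin n → Fin n → ℝ) (i : Fin n) : ℝ :=
  (∑ j ∈ E.F i, U j i) + ∑ j ∈ E.A i, U i j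

/-- Total threat `τ_i(U)`. -/
def totalThreat {n : ℕ} (E : Env n) (U : Fin n → Fin n → ℝ) (i : Fin n) : ℝ :=
  ∑ j ∈ E.A i, U j i

/-- Country `i` survives under `U` (is safe or precarious). -/
def Survives {n : ℕ} (E : Env n) (U : Fin n → Fin n → ℝ) (i : Fin n) : Prop :=
  totalThreat E U i ≤ totalSupport E U i

open Classical in
/-- Country `i`'s utility `f_i(U)` given pairwise utilities `tF1 ≥ tF0`, `tA1 ≥ tA0`. -/
noncomputable def utility {n : ℕ} (E : Env n) (tF1 tF0 tA1 tA0 : Fin n → Fin n → ℝ)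
    (U : Fin n → Fin n → ℝ) (i : Fin n) : ℝ :=
  if totalSupport E U i < totalThreat E U i then tF0 i i
  else (∑ j ∈ E.F i, if totalThreat E U j ≤ totalSupport E U j then tF1 i j else tF0 i j)
     + ∑ j ∈ E.A i, if totalSupport E U j ≤ totalThreat E U j then tA1 i j else tA0 i j

/-- `U` is a (pure strategy) Nash equilibrium of the power allocation game. -/
noncomputable def IsNash {n : ℕ} (E : Env n) (tF1 tF0 tA1 tA0 : Fin n → Fin n → ℝ)
    (U : Fin n → Fin n → ℝ) : Prop :=
  IsStrat E U ∧ ∀ (i : Fin n) (v : Fin n → ℝ), (∀ j, 0 ≤ v j) → (∑ j, v j = E.p i) →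
    (∀ j, j ∉ E.F i → j ∉ E.A i → v j = 0) →
    utility E tF1 tF0 tA1 tA0 (Function.update U i v) i ≤ utility E tF1 tF0 tA1 tA0 U i

/-- Country `i`'s optimal welfare: the sup of its utility over all strategy matrices. -/
noncomputable def optWelfare {n : ℕ} (E : Env n) (tF1 tF0 tA1 tA0 : Fin n → Fin n → ℝ)
    (i : Fin n) : ℝ :=
  sSup {x | ∃ U, IsStrat E U ∧ x = utility E tF1 tF0 tA1 tA0 U i}

/-- Lemma 1: under any strategy matrix at least one country survives. -/
theorem exists_survivor {n : ℕ} (hn : 0 < n) (E : Env n) (U : Fin n → Fin n → ℝ)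
    (hU : IsStrat E U) :
    ∃ i : Fin n, Survives E U i := by
  obtain ⟨hpos, -, -⟩ := hU
  by_contra h
  push_neg at h
  have key : ∑ i, (totalSupport E U i - totalThreat E U i) < 0 := by
    have : ∀ i : Fin n, totalSupport E U i - totalThreat E U i < 0 := by
      intro i
      have := h i
      unfold Survives at this
      linarith [not_le.mp this]
    calc ∑ i, (totalSupport E U i - totalThreat E U i) < ∑ _i : Fin n, (0:ℝ) :=
          Finset.sum_lt_sum_of_nonempty (Finset.univ_nonempty_iff.mpr ⟨⟨0, hn⟩⟩)
            (fun i _ => this i)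
      _ = 0 := by simp
  have swap : ∑ i, ∑ j ∈ E.A i, U i j = ∑ i, ∑ j ∈ E.A i, U j i := by
    have h1 : ∀ i : Fin n, ∑ j ∈ E.A i, U i j = ∑ j, if j ∈ E.A i then U i j else 0 :=
      fun i => by simp [Finset.sum_ite_mem]
    have h2 : ∀ i : Fin n, ∑ j ∈ E.A i, U j i = ∑ j, if j ∈ E.A i then U j i else 0 :=
      fun i => by simp [Finset.sum_ite_mem]
    simp only [h1, h2]
    rw [Finset.sum_comm]
    refine Finset.sum_congr rfl fun j _ => Finset.sum_congr rfl fun i _ => ?_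
    by_cases hij : j ∈ E.A i
    · rw [if_pos hij, if_pos ((E.A_symm i j).mp hij)]
    · rw [if_neg hij, if_neg (fun hc => hij ((E.A_symm j i).mp hc))]
  have expand : ∑ i, (totalSupport E U i - totalThreat E U i)
      = ∑ i, ((∑ j ∈ E.F i, U j i) + (∑ j ∈ E.A i, U i j) - ∑ j ∈ E.A i, U j i) := rfl
  rw [expand] at key
  have : (0:ℝ) ≤ ∑ i, ((∑ j ∈ E.F i, U j i) + (∑ j ∈ E.A i, U i j) - ∑ j ∈ E.A i, U j i) := by
    have hsplit : ∑ i, ((∑ j ∈ E.F i, U j i) + (∑ j ∈ E.A i, U i j) - ∑ j ∈ E.A i, U j i)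
        = (∑ i, ∑ j ∈ E.F i, U j i) + ((∑ i, ∑ j ∈ E.A i, U i j) - ∑ i, ∑ j ∈ E.A i, U j i) := by
      rw [Finset.sum_sub_distrib, Finset.sum_add_distrib]; ring
    rw [hsplit, swap, sub_self, add_zero]
    exact Finset.sum_nonneg fun i _ => Finset.sum_nonneg fun j _ => hpos j i
  linarith
end

section
/- (Theorem 3, sufficient condition for the paradox) Let N be a finite set of n ≥ 3 countries with powers p_k ≥ 0, and suppose there are two distinct countries i and j with p_i > 0 such that t_ij^A(1) > t_ij^F(1) and p_i + p_j ≤ Σ_{k∈N, k∉{i,j}} p_k. Then there exist two environments Γ and Γ̄ on N with these powers, identical except that j is a friend of i in Γ and an adversary of i in Γ̄ (namely: in Γ, country i is a friend of every country, every country other than i is an adversary of j, and there are no other relations; Γ̄ is the same except that i is an adversary of j), such that country i's optimal welfare satisfies f*_i(Γ) < f*_i(Γ̄); i.e. having the additional friend j strictly decreases country i's optimal welfare. -/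
open Finset

open Classical in
noncomputable def EnvG {n : ℕ} (i j : Fin n) (hij : i ≠ j) (p : Fin n → ℝ) (hp : ∀ k, 0 ≤ p k) : Env n where
  F k := Finset.univ.filter (fun l => k = l ∨ k = i ∨ l = i)
  A k := Finset.univ.filter (fun l => (k = j ∧ l ≠ i ∧ l ≠ j) ∨ (l = j ∧ k ≠ i ∧ k ≠ j))
  p := p
  self_friend k := by simp
  disj k := by
    rw [Finset.disjoint_left]
    intro l hl hl'
    simp only [Finset.mem_filter, Finset.mem_univ, true_and] at hl hl'
    rcases hl' with ⟨h1, h2, h3⟩ | ⟨h1, h2, h3⟩ <;> rcases hl with h | h | h <;> simp_all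
  F_symm k l := by simp only [Finset.mem_filter, Finset.mem_univ, true_and]; tauto
  A_symm k l := by simp only [Finset.mem_filter, Finset.mem_univ, true_and]; tauto
  p_nonneg := hp

open Classical in
noncomputable def EnvG' {n : ℕ} (i j : Fin n) (hij : i ≠ j) (p : Fin n → ℝ) (hp : ∀ k, 0 ≤ p k) : Env n where
  F k := Finset.univ.filter (fun l => k = l ∨ (k = i ∧ l ≠ j) ∨ (l = i ∧ k ≠ j))
  A k := Finset.univ.filter (fun l => (k = j ∧ l ≠ j) ∨ (l = j ∧ k ≠ j))
  p := p
  self_friend k := by simp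
  disj k := by
    rw [Finset.disjoint_left]
    intro l hl hl'
    simp only [Finset.mem_filter, Finset.mem_univ, true_and] at hl hl'
    rcases hl' with ⟨h1, h2⟩ | ⟨h1, h2⟩ <;> rcases hl with h | ⟨h, h'⟩ | ⟨h, h'⟩ <;> simp_all
  F_symm k l := by simp only [Finset.mem_filter, Finset.mem_univ, true_and]; tauto
  A_symm k l := by simp only [Finset.mem_filter, Finset.mem_univ, true_and]; tauto
  p_nonneg := hp

/-- Theorem 3, sufficient condition: if `t_ij^A(1) > t_ij^F(1)` and
`p_i + p_j ≤ Σ_{k ∉ {i,j}} p_k`, then there are two environments `E` (in which `i` is a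
friend of every country, every country other than `i` is an adversary of `j`, and there
are no other relations) and `E'` (the same except `i` is an adversary of `j`) with
`f*_i(E) < f*_i(E')`: the additional friend `j` strictly decreases `i`'s optimal welfare. -/
theorem paradox_sufficient_condition {n : ℕ} (hn : 3 ≤ n) (p : Fin n → ℝ)
    (hp : ∀ k, 0 ≤ p k) (i j : Fin n) (hij : i ≠ j) (hpi : 0 < p i)
    (tF1 tF0 tA1 tA0 : Fin n → Fin n → ℝ)
    (ht : ∀ k l, tF0 k l ≤ tF1 k l ∧ tA0 k l ≤ tA1 k l)
    (htij : tF1 i j < tA1 i j)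
    (hpow : p i + p j ≤ ∑ k ∈ Finset.univ \ {i, j}, p k) :
    ∃ E E' : Env n, E.p = p ∧ E'.p = p ∧
      (∀ k l, l ∈ E.F k ↔ (k = l ∨ k = i ∨ l = i)) ∧
      (∀ k l, l ∈ E.A k ↔ ((k = j ∧ l ≠ i ∧ l ≠ j) ∨ (l = j ∧ k ≠ i ∧ k ≠ j))) ∧
      (∀ k l, l ∈ E'.F k ↔ (k = l ∨ (k = i ∧ l ≠ j) ∨ (l = i ∧ k ≠ j))) ∧
      (∀ k l, l ∈ E'.A k ↔ ((k = j ∧ l ≠ j) ∨ (l = j ∧ k ≠ j))) ∧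
      optWelfare E tF1 tF0 tA1 tA0 i < optWelfare E' tF1 tF0 tA1 tA0 i := by
  classical
  set E : Env n := EnvG i j hij p hp with hE
  set E' : Env n := EnvG' i j hij p hp with hE'
  refine ⟨E, E', rfl, rfl, fun k l => by simp [hE, EnvG], fun k l => by simp [hE, EnvG],
    fun k l => by simp [hE', EnvG'], fun k l => by simp [hE', EnvG'], ?_⟩
  have hji : j ≠ i := Ne.symm hij
  -- basic finset identities
  have hFiE : E.F i = Finset.univ := by
    ext l; simp [hE, EnvG]
  have hAiE : E.A i = ∅ := by
    ext l; simp [hE, EnvG, hij]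
  have hFiE' : E'.F i = Finset.univ \ {j} := by
    ext l
    by_cases hl : l = j
    · subst hl; simp [hE', EnvG', hij, hji]
    · simp [hE', EnvG', hij, hji, hl]
  have hAiE' : E'.A i = {j} := by
    ext l
    by_cases hl : l = j
    · subst hl; simp [hE', EnvG', hij, hji]
    · simp [hE', EnvG', hij, hji, hl]
  have hFjE' : E'.F j = {j} := by
    ext l
    by_cases hl : l = j
    · subst hl; simp [hE', EnvG', hij, hji]
    · have hl' : j ≠ l := Ne.symm hl
      simp [hE', EnvG', hji, hl, hl']
  have hAjE' : E'.A j = Finset.univ \ {j} := by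
    ext l
    by_cases hl : l = j
    · subst hl; simp [hE', EnvG']
    · simp [hE', EnvG', hl]
  have hAlE' : ∀ l : Fin n, l ≠ j → E'.A l = {j} := by
    intro l hl
    ext m
    by_cases hm : m = j
    · subst hm; simp [hE', EnvG', hl]
    · simp [hE', EnvG', hl, hm]
  ------ Part 1: optWelfare E = ∑ l, tF1 i l ------
  set B : ℝ := ∑ l, tF1 i l with hBdef
  -- support nonneg for any nonneg matrix
  have hsupp : ∀ (Env₀ : Env n) (U : Fin n → Fin n → ℝ), (∀ k l, 0 ≤ U k l) → ∀ k,
      0 ≤ totalSupport Env₀ U k := by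
    intro Env₀ U hU k
    exact add_nonneg (Finset.sum_nonneg fun l _ => hU l k) (Finset.sum_nonneg fun l _ => hU k l)
  -- i is always safe in E
  have hsafeE : ∀ U : Fin n → Fin n → ℝ, (∀ k l, 0 ≤ U k l) →
      ¬ (totalSupport E U i < totalThreat E U i) := by
    intro U hU
    have : totalThreat E U i = 0 := by
      simp [totalThreat, hAiE]
    rw [this]
    exact not_lt.2 (hsupp E U hU i)
  -- upper bound on utility in E
  have hubE : ∀ U : Fin n → Fin n → ℝ, IsStrat E U → utility E tF1 tF0 tA1 tA0 U i ≤ B := by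
    intro U hU
    rw [utility, if_neg (hsafeE U hU.1)]
    have h1 : (∑ l ∈ E.F i, if totalThreat E U l ≤ totalSupport E U l then tF1 i l else tF0 i l)
        ≤ ∑ l ∈ E.F i, tF1 i l := by
      refine Finset.sum_le_sum fun l _ => ?_
      split
      · exact le_rfl
      · exact (ht i l).1
    have h2 : (∑ l ∈ E.A i, if totalSupport E U l ≤ totalThreat E U l then tA1 i l else tA0 i l)
        = 0 := by simp [hAiE]
    rw [h2, add_zero, hFiE] at *
    exact h1
  -- the diagonal strategy achieves B
  set U0 : Fin n → Fin n → ℝ := fun k l => if k = l then p l else 0 with hU0def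
  have hU0nn : ∀ k l, 0 ≤ U0 k l := by
    intro k l; simp only [hU0def]; split
    · exact hp l
    · exact le_rfl
  have hstrat0 : IsStrat E U0 := by
    refine ⟨hU0nn, fun k => by simp [hU0def, Finset.sum_ite_eq, hE, EnvG], fun k l hF _ => ?_⟩
    have : k ≠ l := by
      rintro rfl
      exact hF (E.self_friend k)
    simp [hU0def, this]
  have hthr0 : ∀ k, totalThreat E U0 k = 0 := by
    intro k
    refine Finset.sum_eq_zero fun l hl => ?_
    have hlk : l ≠ k := by
      rintro rfl
      exact (Finset.disjoint_left.mp (E.disj l) (E.self_friend l)) hl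
    simp [hU0def, hlk]
  have hval0 : utility E tF1 tF0 tA1 tA0 U0 i = B := by
    rw [utility, if_neg (hsafeE U0 hU0nn)]
    have h2 : (∑ l ∈ E.A i, if totalSupport E U0 l ≤ totalThreat E U0 l then tA1 i l else tA0 i l)
        = 0 := by simp [hAiE]
    rw [h2, add_zero, hFiE]
    refine Finset.sum_congr rfl fun l _ => ?_
    rw [if_pos]
    rw [hthr0 l]
    exact hsupp E U0 hU0nn l
  have hoptE : optWelfare E tF1 tF0 tA1 tA0 i = B := by
    rw [optWelfare]
    apply le_antisymm
    · refine csSup_le ⟨B, U0, hstrat0, hval0.symm⟩ ?_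
      rintro x ⟨U, hU, rfl⟩
      exact hubE U hU
    · exact le_csSup ⟨B, by rintro x ⟨U, hU, rfl⟩; exact hubE U hU⟩ ⟨U0, hstrat0, hval0.symm⟩
  ------ Part 2: optWelfare E' ≥ ∑ l ∈ univ \ {j}, tF1 i l + tA1 i j ------
  set V : ℝ := (∑ l ∈ Finset.univ \ {j}, tF1 i l) + tA1 i j with hVdef
  set U1 : Fin n → Fin n → ℝ := fun k l =>
    if k = i ∨ k = j then (if k = l then p l else 0) else (if l = j then p k else 0) with hU1def
  have hU1nn : ∀ k l, 0 ≤ U1 k l := by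
    intro k l; simp only [hU1def]
    split <;> split <;> first | exact hp _ | exact le_rfl
  have hstrat1 : IsStrat E' U1 := by
    refine ⟨hU1nn, fun k => ?_, fun k l hF hA => ?_⟩
    · by_cases hk : k = i ∨ k = j
      · simp [hU1def, hk, Finset.sum_ite_eq, hE', EnvG']
      · simp [hU1def, hk, Finset.sum_ite_eq', hE', EnvG']
    · by_cases hk : k = i ∨ k = j
      · have : k ≠ l := by
          rintro rfl
          exact hF (E'.self_friend k)
        simp [hU1def, hk, this]
      · push_neg at hk
        have hlj : l ≠ j := by
          intro h
          exact hA (by rw [hAlE' k hk.2, h]; exact Finset.mem_singleton_self j)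
        simp [hU1def, hk.1, hk.2, hlj]
  -- threats under U1
  have hiT : Finset.univ \ ({j} : Finset (Fin n)) = insert i (Finset.univ \ {i, j}) := by
    ext m
    by_cases hm : m = i
    · subst hm; simp [hij]
    · by_cases hm2 : m = j <;> simp [hm, hm2, hij, hji]
  have hinotin : i ∉ Finset.univ \ ({i, j} : Finset (Fin n)) := by simp
  have hthrj : totalThreat E' U1 j = ∑ k ∈ Finset.univ \ {i, j}, p k := by
    rw [totalThreat, hAjE', hiT, Finset.sum_insert hinotin]
    have h1 : U1 i j = 0 := by simp [hU1def, hij]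
    have h2 : ∀ m ∈ Finset.univ \ ({i, j} : Finset (Fin n)), U1 m j = p m := by
      intro m hm
      simp only [Finset.mem_sdiff, Finset.mem_univ, true_and, Finset.mem_insert,
        Finset.mem_singleton] at hm
      push_neg at hm
      simp [hU1def, hm.1, hm.2]
    rw [h1, zero_add, Finset.sum_congr rfl h2]
  have hsuppj : totalSupport E' U1 j = p j := by
    rw [totalSupport, hFjE', hAjE']
    have h1 : (∑ l ∈ ({j} : Finset (Fin n)), U1 l j) = p j := by
      simp [hU1def]
    have h2 : (∑ l ∈ Finset.univ \ ({j} : Finset (Fin n)), U1 j l) = 0 := by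
      refine Finset.sum_eq_zero fun l hl => ?_
      simp only [Finset.mem_sdiff, Finset.mem_univ, true_and, Finset.mem_singleton] at hl
      have : j ≠ l := fun h => hl h.symm
      simp [hU1def, this]
    rw [h1, h2, add_zero]
  have hjdef : totalSupport E' U1 j ≤ totalThreat E' U1 j := by
    rw [hsuppj, hthrj]
    linarith [hp i]
  have hthrl : ∀ l : Fin n, l ≠ j → totalThreat E' U1 l = 0 := by
    intro l hl
    rw [totalThreat, hAlE' l hl, Finset.sum_singleton]
    have : j ≠ l := fun h => hl h.symm
    simp [hU1def, this]
  have hsafel : ∀ l : Fin n, l ≠ j → totalThreat E' U1 l ≤ totalSupport E' U1 l := by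
    intro l hl
    rw [hthrl l hl]
    exact hsupp E' U1 hU1nn l
  have hval1 : utility E' tF1 tF0 tA1 tA0 U1 i = V := by
    rw [utility, if_neg (not_lt.2 (hsafel i hij))]
    have h1 : (∑ l ∈ E'.F i, if totalThreat E' U1 l ≤ totalSupport E' U1 l
        then tF1 i l else tF0 i l) = ∑ l ∈ Finset.univ \ {j}, tF1 i l := by
      rw [hFiE']
      refine Finset.sum_congr rfl fun l hl => ?_
      simp only [Finset.mem_sdiff, Finset.mem_univ, true_and, Finset.mem_singleton] at hl
      exact if_pos (hsafel l hl)
    have h2 : (∑ l ∈ E'.A i, if totalSupport E' U1 l ≤ totalThreat E' U1 l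
        then tA1 i l else tA0 i l) = tA1 i j := by
      rw [hAiE', Finset.sum_singleton, if_pos hjdef]
    rw [h1, h2]
  -- bounded above
  have hbddE' : BddAbove {x | ∃ U, IsStrat E' U ∧ x = utility E' tF1 tF0 tA1 tA0 U i} := by
    refine ⟨max (tF0 i i) ((∑ l ∈ E'.F i, tF1 i l) + ∑ l ∈ E'.A i, tA1 i l), ?_⟩
    rintro x ⟨U, hU, rfl⟩
    rw [utility]
    split
    · exact le_max_left _ _
    · refine le_trans (add_le_add ?_ ?_) (le_max_right _ _)
      · refine Finset.sum_le_sum fun l _ => ?_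
        split
        · exact le_rfl
        · exact (ht i l).1
      · refine Finset.sum_le_sum fun l _ => ?_
        split
        · exact le_rfl
        · exact (ht i l).2
  have hoptE' : V ≤ optWelfare E' tF1 tF0 tA1 tA0 i :=
    le_csSup hbddE' ⟨U1, hstrat1, hval1.symm⟩
  ------ conclusion ------
  rw [hoptE]
  have hsplit : B = (∑ l ∈ Finset.univ \ {j}, tF1 i l) + tF1 i j := by
    rw [hBdef, ← Finset.sum_eq_sum_sdiff_singleton_add (Finset.mem_univ j)]
  calc B = (∑ l ∈ Finset.univ \ {j}, tF1 i l) + tF1 i j := hsplit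
    _ < V := by rw [hVdef]; linarith
    _ ≤ _ := hoptE'
end

section
/- (Corollary 1) Let N be a finite set of countries with powers p_k ≥ 0, let i ∈ N with p_i > 0, and let S ⊆ N be a nonempty subset with i ∉ S such that t_ij^A(1) > t_ij^F(1) for every j ∈ S and p_i + Σ_{j∈S} p_j ≤ Σ_{k∈N, k∉S∪{i}} p_k (so in particular N \ (S ∪ {i}) is nonempty). Then there exist two environments Γ and Γ̄ on N with these powers, identical except that every j ∈ S is a friend of i in Γ and an adversary of i in Γ̄ (namely: in Γ, country i is a friend of every country, every country other than i is an adversary of every j ∈ S, and there are no other relations; Γ̄ is the same except that i is an adversary of every j ∈ S), such that country i's optimal welfare satisfies f*_i(Γ) < f*_i(Γ̄); i.e. having the countries of S as additional friends strictly decreases country i's optimal welfare. -/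
open Finset

set_option maxHeartbeats 1000000

variable {n : ℕ}

def EnvA (p : Fin n → ℝ) (hp : ∀ k, 0 ≤ p k) (i : Fin n) (S : Finset (Fin n))
    (hiS : i ∉ S) : Env n where
  F k := Finset.univ.filter fun l => k = l ∨ k = i ∨ l = i
  A k := Finset.univ.filter fun l => (k ∈ S ∧ l ≠ i ∧ l ≠ k) ∨ (l ∈ S ∧ k ≠ i ∧ k ≠ l)
  p := p
  self_friend k := by simp
  disj k := by
    rw [Finset.disjoint_left]
    intro l h1 h2
    simp only [Finset.mem_filter, Finset.mem_univ, true_and] at h1 h2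
    rcases h1 with rfl | rfl | rfl <;> simp_all
  F_symm k l := by
    simp only [Finset.mem_filter, Finset.mem_univ, true_and]
    constructor <;> rintro (rfl | rfl | rfl) <;> simp
  A_symm k l := by
    simp only [Finset.mem_filter, Finset.mem_univ, true_and]
    exact or_comm
  p_nonneg := hp

def EnvB (p : Fin n → ℝ) (hp : ∀ k, 0 ≤ p k) (i : Fin n) (S : Finset (Fin n))
    (hiS : i ∉ S) : Env n where
  F k := Finset.univ.filter fun l => k = l ∨ (k = i ∧ l ∉ S) ∨ (l = i ∧ k ∉ S)
  A k := Finset.univ.filter fun l => (k ∈ S ∧ l ≠ k) ∨ (l ∈ S ∧ k ≠ l)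
  p := p
  self_friend k := by simp
  disj k := by
    rw [Finset.disjoint_left]
    intro l h1 h2
    simp only [Finset.mem_filter, Finset.mem_univ, true_and] at h1 h2
    rcases h1 with rfl | ⟨rfl, h⟩ | ⟨rfl, h⟩ <;> simp_all
  F_symm k l := by
    simp only [Finset.mem_filter, Finset.mem_univ, true_and]
    constructor <;> rintro (rfl | ⟨rfl, h⟩ | ⟨rfl, h⟩) <;> simp [*]
  A_symm k l := by
    simp only [Finset.mem_filter, Finset.mem_univ, true_and]
    exact or_comm
  p_nonneg := hp

lemma mem_EnvA_F (p : Fin n → ℝ) (hp : ∀ k, 0 ≤ p k) (i : Fin n) (S : Finset (Fin n))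
    (hiS : i ∉ S) (k l : Fin n) :
    l ∈ (EnvA p hp i S hiS).F k ↔ (k = l ∨ k = i ∨ l = i) := by simp [EnvA]

lemma mem_EnvA_A (p : Fin n → ℝ) (hp : ∀ k, 0 ≤ p k) (i : Fin n) (S : Finset (Fin n))
    (hiS : i ∉ S) (k l : Fin n) :
    l ∈ (EnvA p hp i S hiS).A k ↔ ((k ∈ S ∧ l ≠ i ∧ l ≠ k) ∨ (l ∈ S ∧ k ≠ i ∧ k ≠ l)) := by
  simp [EnvA]

lemma mem_EnvB_F (p : Fin n → ℝ) (hp : ∀ k, 0 ≤ p k) (i : Fin n) (S : Finset (Fin n))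
    (hiS : i ∉ S) (k l : Fin n) :
    l ∈ (EnvB p hp i S hiS).F k ↔ (k = l ∨ (k = i ∧ l ∉ S) ∨ (l = i ∧ k ∉ S)) := by
  simp [EnvB]

lemma mem_EnvB_A (p : Fin n → ℝ) (hp : ∀ k, 0 ≤ p k) (i : Fin n) (S : Finset (Fin n))
    (hiS : i ∉ S) (k l : Fin n) :
    l ∈ (EnvB p hp i S hiS).A k ↔ ((k ∈ S ∧ l ≠ k) ∨ (l ∈ S ∧ k ≠ l)) := by
  simp [EnvB]

section MemLemmas
variable (p : Fin n → ℝ) (hp : ∀ k, 0 ≤ p k) (i : Fin n) (S : Finset (Fin n)) (hiS : i ∉ S)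

lemma EnvA_A_i : (EnvA p hp i S hiS).A i = ∅ := by
  ext l; simp [mem_EnvA_A, hiS]

lemma EnvA_F_i : (EnvA p hp i S hiS).F i = Finset.univ := by
  ext l; simp [mem_EnvA_F]

lemma EnvB_F_i : (EnvB p hp i S hiS).F i = Sᶜ := by
  ext l; simp only [mem_EnvB_F, Finset.mem_compl]
  constructor
  · rintro (rfl | ⟨_, h⟩ | ⟨rfl, h⟩) <;> simp_all
  · intro h; tauto

lemma EnvB_A_notmem (k : Fin n) (hk : k ∉ S) : (EnvB p hp i S hiS).A k = S := by
  ext l; simp only [mem_EnvB_A]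
  constructor
  · rintro (⟨h, _⟩ | ⟨h, _⟩) <;> first | exact h | exact absurd h hk
  · intro h; right; exact ⟨h, fun e => hk (e ▸ h)⟩

lemma EnvB_F_mem (j : Fin n) (hj : j ∈ S) : (EnvB p hp i S hiS).F j = {j} := by
  ext l; simp only [mem_EnvB_F, Finset.mem_singleton]
  constructor
  · rintro (rfl | ⟨rfl, _⟩ | ⟨rfl, h⟩)
    · rfl
    · exact absurd hj (by assumption)
    · exact absurd hj h
  · rintro rfl; left; rfl

lemma EnvB_A_mem (j : Fin n) (hj : j ∈ S) : (EnvB p hp i S hiS).A j = {j}ᶜ := by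
  ext l; simp only [mem_EnvB_A, Finset.mem_compl, Finset.mem_singleton]
  constructor
  · rintro (⟨_, h⟩ | ⟨_, h⟩) <;> [exact h; exact fun e => h e.symm]
  · intro h; left; exact ⟨hj, h⟩

end MemLemmas

/-- Corollary 1: if `t_ij^A(1) > t_ij^F(1)` for every `j` in a nonempty set
`S ∌ i` and `p_i + Σ_{j ∈ S} p_j ≤ Σ_{k ∉ S ∪ {i}} p_k`, then there are two environments
`E` (in which `i` is a friend of every country, every country other than `i` is an
adversary of every `j ∈ S`, and there are no other relations) and `E'` (the same except
`i` is an adversary of every `j ∈ S`) with `f*_i(E) < f*_i(E')`: having the countries of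
`S` as additional friends strictly decreases `i`'s optimal welfare. -/
theorem paradox_sufficient_condition_subset {n : ℕ} (p : Fin n → ℝ)
    (hp : ∀ k, 0 ≤ p k) (i : Fin n) (hpi : 0 < p i) (S : Finset (Fin n))
    (hS : S.Nonempty) (hiS : i ∉ S)
    (tF1 tF0 tA1 tA0 : Fin n → Fin n → ℝ)
    (ht : ∀ k l, tF0 k l ≤ tF1 k l ∧ tA0 k l ≤ tA1 k l)
    (htS : ∀ j ∈ S, tF1 i j < tA1 i j)
    (hpow : p i + ∑ j ∈ S, p j ≤ ∑ k ∈ Finset.univ \ insert i S, p k) :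
    ∃ E E' : Env n, E.p = p ∧ E'.p = p ∧
      (∀ k l, l ∈ E.F k ↔ (k = l ∨ k = i ∨ l = i)) ∧
      (∀ k l, l ∈ E.A k ↔ ((k ∈ S ∧ l ≠ i ∧ l ≠ k) ∨ (l ∈ S ∧ k ≠ i ∧ k ≠ l))) ∧
      (∀ k l, l ∈ E'.F k ↔ (k = l ∨ (k = i ∧ l ∉ S) ∨ (l = i ∧ k ∉ S))) ∧
      (∀ k l, l ∈ E'.A k ↔ ((k ∈ S ∧ l ≠ k) ∨ (l ∈ S ∧ k ≠ l))) ∧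
      optWelfare E tF1 tF0 tA1 tA0 i < optWelfare E' tF1 tF0 tA1 tA0 i := by
  classical
  set T : Finset (Fin n) := Finset.univ \ insert i S with hTdef
  have hTmem : ∀ k, k ∈ T ↔ (k ≠ i ∧ k ∉ S) := by
    intro k; simp [hTdef]
  set PS := ∑ j ∈ S, p j with hPSdef
  set PT := ∑ k ∈ T, p k with hPTdef
  have hPS0 : 0 ≤ PS := Finset.sum_nonneg fun j _ => hp j
  have hPT0 : 0 < PT := lt_of_lt_of_le hpi (by linarith)
  have hPTne : PT ≠ 0 := ne_of_gt hPT0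
  have hPSPT : PS ≤ PT := by linarith
  refine ⟨EnvA p hp i S hiS, EnvB p hp i S hiS, rfl, rfl, mem_EnvA_F p hp i S hiS,
    mem_EnvA_A p hp i S hiS, mem_EnvB_F p hp i S hiS, mem_EnvB_A p hp i S hiS, ?_⟩
  -- diagonal strategy for EnvA
  have hDstrat : IsStrat (EnvA p hp i S hiS) (fun k l => if l = k then p k else 0) := by
    refine ⟨?_, ?_, ?_⟩
    · intro k l; dsimp only; split
      · exact hp k
      · exact le_refl 0
    · intro k; simp [EnvA]
    · intro k l hF _
      dsimp only; rw [if_neg]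
      rintro rfl
      exact hF ((mem_EnvA_F p hp i S hiS l l).2 (Or.inl rfl))
  -- upper bound on optimal welfare in EnvA
  have hAle : optWelfare (EnvA p hp i S hiS) tF1 tF0 tA1 tA0 i ≤ ∑ j, tF1 i j := by
    refine csSup_le ⟨_, ⟨_, hDstrat, rfl⟩⟩ ?_
    rintro x ⟨V, hV, rfl⟩
    have hτ : totalThreat (EnvA p hp i S hiS) V i = 0 := by
      rw [totalThreat, EnvA_A_i]; simp
    have hσ : 0 ≤ totalSupport (EnvA p hp i S hiS) V i :=
      add_nonneg (Finset.sum_nonneg fun _ _ => hV.1 _ _)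
        (Finset.sum_nonneg fun _ _ => hV.1 _ _)
    rw [utility, if_neg (by rw [hτ]; exact not_lt.mpr hσ), EnvA_A_i]
    simp only [Finset.sum_empty, add_zero]
    calc (∑ j ∈ (EnvA p hp i S hiS).F i,
            if totalThreat (EnvA p hp i S hiS) V j ≤ totalSupport (EnvA p hp i S hiS) V j
            then tF1 i j else tF0 i j)
        ≤ ∑ j ∈ (EnvA p hp i S hiS).F i, tF1 i j := by
          refine Finset.sum_le_sum fun j _ => ?_
          split
          · exact le_refl _
          · exact (ht i j).1
      _ = ∑ j, tF1 i j := by rw [EnvA_F_i]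
  -- the strategy for EnvB
  set U : Fin n → Fin n → ℝ := fun k l =>
    if k ∈ S then (if l = k then p k else 0)
    else if k = i then (if l = i then p i else 0)
    else if l ∈ S then p k * p l / PT
    else if l = k then p k * (1 - PS / PT) else 0
    with hU
  have hUS : ∀ j ∈ S, ∀ l, U j l = if l = j then p j else 0 := by
    intro j hj l; simp [hU, hj]
  have hUi : ∀ l, U i l = if l = i then p i else 0 := by
    intro l; simp [hU, hiS]
  have hUT : ∀ k, k ≠ i → k ∉ S → ∀ l,
      U k l = if l ∈ S then p k * p l / PT else if l = k then p k * (1 - PS / PT) else 0 := by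
    intro k hki hkS l; simp [hU, hkS, hki]
  have hsub : 0 ≤ 1 - PS / PT := by
    rw [sub_nonneg]; exact div_le_one_of_le₀ hPSPT hPT0.le
  have hUnn : ∀ k l, 0 ≤ U k l := by
    intro k l; rw [hU]; dsimp only
    split_ifs <;>
      first
        | exact le_refl 0
        | exact hp _
        | exact div_nonneg (mul_nonneg (hp _) (hp _)) hPT0.le
        | exact mul_nonneg (hp _) hsub
  have hUrow : ∀ k, ∑ l, U k l = p k := by
    intro k
    by_cases hk : k ∈ S
    · simp [hUS k hk]
    · by_cases hki : k = i
      · subst hki; simp [hUi]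
      · have hrw := hUT k hki hk
        calc ∑ l, U k l = (∑ l ∈ S, U k l) + ∑ l ∈ Sᶜ, U k l :=
              (Finset.sum_add_sum_compl S _).symm
          _ = p k * PS / PT + p k * (1 - PS / PT) := by
              congr 1
              · calc ∑ l ∈ S, U k l = ∑ l ∈ S, p k * p l / PT :=
                      Finset.sum_congr rfl fun l hl => by rw [hrw l, if_pos hl]
                  _ = p k * PS / PT := by rw [← Finset.sum_div, ← Finset.mul_sum]
              · calc ∑ l ∈ Sᶜ, U k l
                    = ∑ l ∈ Sᶜ, (if l = k then p k * (1 - PS / PT) else 0) :=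
                      Finset.sum_congr rfl fun l hl => by
                        rw [hrw l, if_neg (Finset.mem_compl.mp hl)]
                  _ = p k * (1 - PS / PT) := by
                      rw [Finset.sum_ite_eq' Sᶜ k fun _ => p k * (1 - PS / PT),
                        if_pos (Finset.mem_compl.mpr hk)]
          _ = p k := by ring
  have hUsupp : ∀ k l, l ∉ (EnvB p hp i S hiS).F k → l ∉ (EnvB p hp i S hiS).A k → U k l = 0 := by
    intro k l hF hA
    rw [mem_EnvB_F p hp i S hiS k l] at hF
    rw [mem_EnvB_A p hp i S hiS k l] at hA
    push_neg at hF hA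
    by_cases hk : k ∈ S
    · rw [hUS k hk l, if_neg fun e => hF.1 e.symm]
    · by_cases hki : k = i
      · subst hki
        rw [hUi l, if_neg]
        rintro rfl
        exact hiS (hF.2.1 rfl)
      · rw [hUT k hki hk l, if_neg, if_neg fun e => hF.1 e.symm]
        intro hl
        exact hk (by rw [hA.2 hl]; exact hl)
  have hUstrat : IsStrat (EnvB p hp i S hiS) U := ⟨hUnn, hUrow, hUsupp⟩
  -- threat/support computations under U
  have hτS : ∀ j ∈ S, totalThreat (EnvB p hp i S hiS) U j = p j := by
    intro j hj
    rw [totalThreat, EnvB_A_mem p hp i S hiS j hj]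
    have hcongr : ∀ l ∈ ({j}ᶜ : Finset (Fin n)),
        U l j = if l ∈ T then p l * p j / PT else 0 := by
      intro l hl
      have hlj : l ≠ j := by simpa using hl
      by_cases hls : l ∈ S
      · rw [hUS l hls j, if_neg fun e => hlj e.symm,
          if_neg fun hT => ((hTmem l).1 hT).2 hls]
      · by_cases hli : l = i
        · rw [hli, hUi j, if_neg (fun (e : j = i) => hiS (e ▸ hj)),
            if_neg fun hT => ((hTmem i).1 hT).1 rfl]
        · rw [hUT l hli hls j, if_pos hj, if_pos ((hTmem l).2 ⟨hli, hls⟩)]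
    rw [Finset.sum_congr rfl hcongr, Finset.sum_ite_mem]
    have hinter : ({j}ᶜ : Finset (Fin n)) ∩ T = T := by
      ext l
      simp only [Finset.mem_inter, Finset.mem_compl, Finset.mem_singleton]
      constructor
      · exact fun h => h.2
      · intro h
        exact ⟨fun e => ((hTmem l).1 h).2 (e ▸ hj), h⟩
    rw [hinter, ← Finset.sum_div, ← Finset.sum_mul, ← hPTdef]
    field_simp
  have hσS : ∀ j ∈ S, totalSupport (EnvB p hp i S hiS) U j = p j := by
    intro j hj
    rw [totalSupport, EnvB_F_mem p hp i S hiS j hj, EnvB_A_mem p hp i S hiS j hj,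
      Finset.sum_singleton]
    have h1 : U j j = p j := by rw [hUS j hj j, if_pos rfl]
    have h2 : ∑ l ∈ ({j}ᶜ : Finset (Fin n)), U j l = 0 :=
      Finset.sum_eq_zero fun l hl => by
        rw [hUS j hj l, if_neg (by simpa using hl)]
    rw [h1, h2, add_zero]
  have hτ0 : ∀ k, k ∉ S → totalThreat (EnvB p hp i S hiS) U k = 0 := by
    intro k hk
    rw [totalThreat, EnvB_A_notmem p hp i S hiS k hk]
    exact Finset.sum_eq_zero fun j hj => by
      rw [hUS j hj k, if_neg fun e => hk (by rw [e]; exact hj)]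
  have hsafe : ∀ k, k ∉ S →
      totalThreat (EnvB p hp i S hiS) U k ≤ totalSupport (EnvB p hp i S hiS) U k := by
    intro k hk
    rw [hτ0 k hk]
    exact add_nonneg (Finset.sum_nonneg fun _ _ => hUnn _ _)
      (Finset.sum_nonneg fun _ _ => hUnn _ _)
  set Bv := (∑ j ∈ Sᶜ, tF1 i j) + ∑ j ∈ S, tA1 i j with hBv
  have hutil : utility (EnvB p hp i S hiS) tF1 tF0 tA1 tA0 U i = Bv := by
    rw [utility, if_neg (not_lt.mpr (hsafe i hiS)), EnvB_F_i p hp i S hiS,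
      EnvB_A_notmem p hp i S hiS i hiS, hBv]
    congr 1
    · exact Finset.sum_congr rfl fun j hj => if_pos (hsafe j (Finset.mem_compl.mp hj))
    · exact Finset.sum_congr rfl fun j hj =>
        if_pos (le_of_eq ((hσS j hj).trans (hτS j hj).symm))
  have hbdd : BddAbove {x | ∃ V, IsStrat (EnvB p hp i S hiS) V ∧
      x = utility (EnvB p hp i S hiS) tF1 tF0 tA1 tA0 V i} := by
    refine ⟨max (tF0 i i) Bv, ?_⟩
    rintro x ⟨V, hV, rfl⟩
    rw [utility]
    split
    · exact le_max_left _ _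
    · refine le_trans ?_ (le_max_right _ _)
      rw [EnvB_F_i p hp i S hiS, EnvB_A_notmem p hp i S hiS i hiS, hBv]
      refine add_le_add (Finset.sum_le_sum fun j _ => ?_) (Finset.sum_le_sum fun j _ => ?_)
      · split
        · exact le_refl _
        · exact (ht i j).1
      · split
        · exact le_refl _
        · exact (ht i j).2
  have hBle : Bv ≤ optWelfare (EnvB p hp i S hiS) tF1 tF0 tA1 tA0 i :=
    le_csSup hbdd ⟨U, hUstrat, hutil.symm⟩
  have hlt : ∑ j, tF1 i j < Bv := by
    rw [← Finset.sum_add_sum_compl S (tF1 i), hBv, add_comm]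
    exact add_lt_add_of_le_of_lt (le_refl _) (Finset.sum_lt_sum_of_nonempty hS htS)
  exact lt_of_le_of_lt hAle (lt_of_lt_of_le hlt hBle)
end

section
/- (Feasibility claim used in the proof of Theorem 3) Let N be a finite set of n ≥ 3 countries with powers p_k ≥ 0, and fix distinct countries i and j with p_i > 0 and p_i + p_j ≤ Σ_{k∈N, k∉{i,j}} p_k. Consider the environment Γ̄ in which every country other than j is an adversary of j, country i is a friend of every country other than j, and there are no other relations. Then there exists a strategy matrix U for Γ̄ under which σ_j(U) ≤ τ_j(U) (country j is unsafe or precarious) while every country k ≠ j survives (σ_k(U) ≥ τ_k(U)). -/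
open Finset

/-- feasibility claim in the proof of Theorem 3: in the environment where
every country other than `j` is an adversary of `j`, `i` is a friend of every country
other than `j`, and there are no other relations, if `p_i + p_j ≤ Σ_{k ∉ {i,j}} p_k` then
there is a strategy matrix under which `j` is unsafe or precarious while every other
country survives. -/
theorem feasibility_of_demise {n : ℕ} (hn : 3 ≤ n) (i j : Fin n) (hij : i ≠ j)
    (E : Env n) (hpi : 0 < E.p i)
    (hpow : E.p i + E.p j ≤ ∑ k ∈ Finset.univ \ {i, j}, E.p k)
    (hF : ∀ k l, l ∈ E.F k ↔ (k = l ∨ (k = i ∧ l ≠ j) ∨ (l = i ∧ k ≠ j)))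
    (hA : ∀ k l, l ∈ E.A k ↔ ((k = j ∧ l ≠ j) ∨ (l = j ∧ k ≠ j))) :
    ∃ U, IsStrat E U ∧ totalSupport E U j ≤ totalThreat E U j ∧
      ∀ k, k ≠ j → Survives E U k := by

  set S := ∑ k ∈ Finset.univ \ {i, j}, E.p k with hSdef
  have hS : 0 < S := lt_of_lt_of_le (by linarith [E.p_nonneg j]) hpow
  set c : ℝ := E.p j / S with hcdef
  have hc0 : 0 ≤ c := div_nonneg (E.p_nonneg j) hS.le
  have hc1 : c ≤ 1 := by
    rw [hcdef, div_le_one hS]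
    linarith
  have hcS : c * S = E.p j := div_mul_cancel₀ _ hS.ne'
  set U : Fin n → Fin n → ℝ := fun k l =>
    if k = j then (if l = j then E.p j else 0)
    else if k = i then (if l = j then E.p i else 0)
    else if l = j then c * E.p k
    else if l = k then (1 - c) * E.p k else 0 with hU
  have hUnn : ∀ k l, 0 ≤ U k l := by
    intro k l
    simp only [hU]
    split_ifs
    all_goals first
      | exact le_refl 0
      | exact E.p_nonneg j
      | exact E.p_nonneg i
      | exact mul_nonneg hc0 (E.p_nonneg _)
      | exact mul_nonneg (by linarith) (E.p_nonneg _)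
  have hFj : E.F j = {j} := by
    ext l
    rw [Finset.mem_singleton, hF]
    constructor
    · rintro (h | ⟨h, -⟩ | ⟨-, h⟩)
      · exact h.symm
      · exact absurd h.symm hij
      · exact absurd rfl h
    · rintro rfl; exact Or.inl rfl
  have hAj : E.A j = Finset.univ \ {j} := by
    ext l
    rw [Finset.mem_sdiff, hA]
    constructor
    · rintro (⟨-, h⟩ | ⟨h, h'⟩)
      · exact ⟨Finset.mem_univ l, by simpa using h⟩
      · exact absurd rfl h'
    · intro h
      exact Or.inl ⟨rfl, by simpa using h.2⟩
  have hAk : ∀ k, k ≠ j → E.A k = {j} := by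
    intro k hk
    ext l
    rw [Finset.mem_singleton, hA]
    constructor
    · rintro (⟨h, -⟩ | ⟨h, -⟩)
      · exact absurd h hk
      · exact h
    · rintro rfl; exact Or.inr ⟨rfl, hk⟩
  refine ⟨U, ⟨hUnn, ?_, ?_⟩, ?_, ?_⟩
  · -- row sums
    intro k
    rcases eq_or_ne k j with rfl | hkj
    · simp only [hU, if_pos rfl]
      simp
    rcases eq_or_ne k i with rfl | hki
    · simp only [hU, if_neg hkj, if_pos rfl]
      simp
    · have hrow : ∀ l, U k l =
          (if l = j then c * E.p k else 0) + (if l = k then (1 - c) * E.p k else 0) := by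
        intro l
        simp only [hU, if_neg hkj, if_neg hki]
        rcases eq_or_ne l j with rfl | hlj
        · rw [if_neg (Ne.symm hkj)]; simp
        · simp [hlj]
      simp only [hrow]
      rw [Finset.sum_add_distrib, Finset.sum_ite_eq' Finset.univ j,
        Finset.sum_ite_eq' Finset.univ k]
      simp
      ring
  · -- support condition
    intro k l hkF hkA
    rw [hF] at hkF
    rw [hA] at hkA
    push_neg at hkF hkA
    obtain ⟨h1, h2, h3⟩ := hkF
    obtain ⟨h4, h5⟩ := hkA
    rcases eq_or_ne k j with rfl | hkj
    · exact absurd (h4 rfl).symm h1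
    rcases eq_or_ne k i with rfl | hki
    · exact absurd (h5 (h2 rfl)) hkj
    · have hlj : l ≠ j := fun h => hkj (h5 h)
      have hlk : l ≠ k := fun h => h1 h.symm
      simp only [hU, if_neg hkj, if_neg hki, if_neg hlj, if_neg hlk]
  · -- σ_j ≤ τ_j
    have hσ : totalSupport E U j = E.p j := by
      rw [totalSupport, hFj, hAj]
      have h1 : ∑ l ∈ ({j} : Finset (Fin n)), U l j = E.p j := by
        simp [hU]
      have h2 : ∑ l ∈ Finset.univ \ {j}, U j l = 0 := by
        apply Finset.sum_eq_zero
        intro l hl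
        simp only [Finset.mem_sdiff, Finset.mem_singleton] at hl
        simp [hU, hl.2]
      rw [h1, h2, add_zero]
    have hτ : totalThreat E U j = E.p i + E.p j := by
      rw [totalThreat, hAj]
      have hsub : Finset.univ \ {i, j} ⊆ Finset.univ \ {j} := by
        intro x hx
        simp only [Finset.mem_sdiff, Finset.mem_insert, Finset.mem_singleton] at hx ⊢
        exact ⟨hx.1, fun h => hx.2 (Or.inr h)⟩
      have hiu : Finset.univ \ {j} = insert i (Finset.univ \ {i, j}) := by
        ext x
        simp only [Finset.mem_sdiff, Finset.mem_insert, Finset.mem_singleton,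
          Finset.mem_univ, true_and]
        constructor
        · intro hx
          rcases eq_or_ne x i with rfl | hxi
          · exact Or.inl rfl
          · exact Or.inr fun h => h.elim hxi hx
        · rintro (rfl | hx)
          · exact hij
          · exact fun h => hx (Or.inr h)
      rw [hiu, Finset.sum_insert (by simp)]
      have hUi : U i j = E.p i := by simp [hU, hij]
      have hrest : ∑ l ∈ Finset.univ \ {i, j}, U l j = c * S := by
        rw [Finset.mul_sum]
        apply Finset.sum_congr rfl
        intro l hl
        simp only [Finset.mem_sdiff, Finset.mem_insert, Finset.mem_singleton] at hl
        have hli : l ≠ i := fun h => hl.2 (Or.inl h)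
        have hlj : l ≠ j := fun h => hl.2 (Or.inr h)
        simp [hU, hli, hlj]
      rw [hUi, hrest, hcS]
    rw [hσ, hτ]
    linarith
  · -- everyone else survives
    intro k hk
    unfold Survives totalThreat totalSupport
    rw [hAk k hk]
    have h0 : ∑ l ∈ ({j} : Finset (Fin n)), U l k = 0 := by
      simp [hU, hk]
    rw [h0]
    have h1 : 0 ≤ ∑ l ∈ E.F k, U l k := Finset.sum_nonneg fun l _ => hUnn l k
    have h2 : 0 ≤ ∑ l ∈ E.A k, U k l := Finset.sum_nonneg fun l _ => hUnn k l
    rw [hAk k hk] at h2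
    linarith
end

section
/- (Theorem 4, price of anarchy bounds) Assume t_ij^F(0) ≥ 0 and t_ij^A(0) ≥ 0 for every ordered pair (i,j) with j ≠ i. Consider any environment with n ≥ 1 countries whose set of Nash equilibria is nonempty, and set A = n · max_{i∈N} ( Σ_{j∈F_i} t_ij^F(1) + Σ_{j∈A_i} t_ij^A(1) ) and B = (n−1) · min_{i∈N} t_ii^F(0) + min_{i∈N} t_ii^F(1). If B > 0, then the price of anarchy PoA = (sup over strategy matrices U of Σ_{i∈N} f_i(U)) / (inf over Nash equilibria U* of Σ_{i∈N} f_i(U*)) satisfies 1 ≤ PoA ≤ A/B. -/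
open Finset

section PoAAux

open Classical

variable {n : ℕ}

private lemma exists_safe_aux (hn : 0 < n) (E : Env n) {U : Fin n → Fin n → ℝ}
    (hU : IsStrat E U) : ∃ i, totalThreat E U i ≤ totalSupport E U i := by
  by_contra h
  push_neg at h
  haveI : Nonempty (Fin n) := ⟨⟨0, hn⟩⟩
  have hsum : ∑ i, totalSupport E U i < ∑ i, totalThreat E U i :=
    Finset.sum_lt_sum_of_nonempty Finset.univ_nonempty (fun i _ => h i)
  have hswap : ∑ i, ∑ j ∈ E.A i, U j i = ∑ i, ∑ j ∈ E.A i, U i j := by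
    rw [Finset.sum_comm' (s' := fun j => E.A j) (t' := Finset.univ)
      (fun x y => by simp [E.A_symm x y])]
  have hF : 0 ≤ ∑ i, ∑ j ∈ E.F i, U j i :=
    Finset.sum_nonneg fun i _ => Finset.sum_nonneg fun j _ => hU.1 j i
  have h1 : ∑ i, totalSupport E U i =
      (∑ i, ∑ j ∈ E.F i, U j i) + ∑ i, ∑ j ∈ E.A i, U i j := by
    simp [totalSupport, Finset.sum_add_distrib]
  have h2 : ∑ i, totalThreat E U i = ∑ i, ∑ j ∈ E.A i, U j i := rfl
  rw [h1, h2, hswap] at hsum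
  linarith

private lemma utility_le_aux (E : Env n) (tF1 tF0 tA1 tA0 : Fin n → Fin n → ℝ)
    (ht : ∀ k j, tF0 k j ≤ tF1 k j ∧ tA0 k j ≤ tA1 k j)
    (ht0 : ∀ k j, j ≠ k → 0 ≤ tF0 k j ∧ 0 ≤ tA0 k j)
    (U : Fin n → Fin n → ℝ) (i : Fin n) :
    utility E tF1 tF0 tA1 tA0 U i ≤ (∑ j ∈ E.F i, tF1 i j) + ∑ j ∈ E.A i, tA1 i j := by
  have hAne : ∀ j ∈ E.A i, j ≠ i := fun j hj hji => by
    exact (Finset.disjoint_left.mp (E.disj i)) (hji ▸ E.self_friend i) hj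
  have hA1 : ∀ j ∈ E.A i, 0 ≤ tA1 i j := fun j hj =>
    le_trans (ht0 i j (hAne j hj)).2 (ht i j).2
  unfold utility
  split_ifs with hcase
  · -- unsafe: tF0 i i ≤ sum
    have h1 : tF0 i i ≤ tF1 i i := (ht i i).1
    have h2 : tF1 i i ≤ ∑ j ∈ E.F i, tF1 i j := by
      rw [← Finset.add_sum_erase _ _ (E.self_friend i)]
      have : 0 ≤ ∑ j ∈ (E.F i).erase i, tF1 i j :=
        Finset.sum_nonneg fun j hj =>
          le_trans (ht0 i j (Finset.ne_of_mem_erase hj)).1 (ht i j).1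
      linarith
    have h3 : 0 ≤ ∑ j ∈ E.A i, tA1 i j := Finset.sum_nonneg hA1
    linarith
  · refine add_le_add (Finset.sum_le_sum fun j _ => ?_) (Finset.sum_le_sum fun j _ => ?_)
    · split_ifs with h
      · exact le_rfl
      · exact (ht i j).1
    · split_ifs with h
      · exact le_rfl
      · exact (ht i j).2

private lemma utility_ge_aux (E : Env n) (tF1 tF0 tA1 tA0 : Fin n → Fin n → ℝ)
    (ht : ∀ k j, tF0 k j ≤ tF1 k j ∧ tA0 k j ≤ tA1 k j)
    (ht0 : ∀ k j, j ≠ k → 0 ≤ tF0 k j ∧ 0 ≤ tA0 k j)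
    (U : Fin n → Fin n → ℝ) (i : Fin n) :
    (if totalThreat E U i ≤ totalSupport E U i then tF1 i i else tF0 i i)
      ≤ utility E tF1 tF0 tA1 tA0 U i := by
  have hAne : ∀ j ∈ E.A i, j ≠ i := fun j hj hji =>
    (Finset.disjoint_left.mp (E.disj i)) (hji ▸ E.self_friend i) hj
  unfold utility
  by_cases hcase : totalSupport E U i < totalThreat E U i
  · rw [if_pos hcase, if_neg (not_le.mpr hcase)]
  · rw [if_neg hcase, if_pos (not_lt.mp hcase)]
    have hFsum : tF1 i i ≤ ∑ j ∈ E.F i,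
        (if totalThreat E U j ≤ totalSupport E U j then tF1 i j else tF0 i j) := by
      rw [← Finset.add_sum_erase _ _ (E.self_friend i), if_pos (not_lt.mp hcase)]
      have : 0 ≤ ∑ j ∈ (E.F i).erase i,
          (if totalThreat E U j ≤ totalSupport E U j then tF1 i j else tF0 i j) := by
        refine Finset.sum_nonneg fun j hj => ?_
        have h0 := (ht0 i j (Finset.ne_of_mem_erase hj)).1
        split_ifs
        · exact le_trans h0 (ht i j).1
        · exact h0
      linarith
    have hAsum : 0 ≤ ∑ j ∈ E.A i,
        (if totalSupport E U j ≤ totalThreat E U j then tA1 i j else tA0 i j) := by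
      refine Finset.sum_nonneg fun j hj => ?_
      have h0 := (ht0 i j (hAne j hj)).2
      split_ifs
      · exact le_trans h0 (ht i j).2
      · exact h0
    linarith

end PoAAux

/-- Theorem 4: under nonnegativity of the `t(0)` utilities for `j ≠ i`,
in any environment with `n ≥ 1` countries possessing a Nash equilibrium, with
`A = n · max_i (Σ_{j ∈ F_i} t_ij^F(1) + Σ_{j ∈ A_i} t_ij^A(1))` and
`B = (n-1) · min_i t_ii^F(0) + min_i t_ii^F(1) > 0`, the price of anarchy satisfies
`1 ≤ PoA ≤ A / B`. -/
theorem price_of_anarchy_bounds {n : ℕ} (hn : 0 < n) (E : Env n)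
    (tF1 tF0 tA1 tA0 : Fin n → Fin n → ℝ)
    (ht : ∀ k j, tF0 k j ≤ tF1 k j ∧ tA0 k j ≤ tA1 k j)
    (ht0 : ∀ k j, j ≠ k → 0 ≤ tF0 k j ∧ 0 ≤ tA0 k j)
    (hNash : ∃ U, IsNash E tF1 tF0 tA1 tA0 U)
    (A B : ℝ)
    (hA : A = n * ⨆ i : Fin n, ((∑ j ∈ E.F i, tF1 i j) + ∑ j ∈ E.A i, tA1 i j))
    (hB : B = ((n : ℝ) - 1) * (⨅ i : Fin n, tF0 i i) + ⨅ i : Fin n, tF1 i i)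
    (hBpos : 0 < B) :
    1 ≤ sSup {x | ∃ U, IsStrat E U ∧ x = ∑ i, utility E tF1 tF0 tA1 tA0 U i} /
          sInf {x | ∃ U, IsNash E tF1 tF0 tA1 tA0 U ∧
            x = ∑ i, utility E tF1 tF0 tA1 tA0 U i} ∧
      sSup {x | ∃ U, IsStrat E U ∧ x = ∑ i, utility E tF1 tF0 tA1 tA0 U i} /
          sInf {x | ∃ U, IsNash E tF1 tF0 tA1 tA0 U ∧
            x = ∑ i, utility E tF1 tF0 tA1 tA0 U i} ≤ A / B := by
    classical
  haveI : Nonempty (Fin n) := ⟨⟨0, hn⟩⟩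
  obtain ⟨U₀, hU₀⟩ := hNash
  set SS := {x | ∃ U, IsStrat E U ∧ x = ∑ i, utility E tF1 tF0 tA1 tA0 U i} with hSS
  set SN := {x | ∃ U, IsNash E tF1 tF0 tA1 tA0 U ∧
      x = ∑ i, utility E tF1 tF0 tA1 tA0 U i} with hSN
  -- upper bound on any strategy welfare
  have hub : ∀ x ∈ SS, x ≤ A := by
    rintro x ⟨U, hU, rfl⟩
    have h1 : ∀ i : Fin n, utility E tF1 tF0 tA1 tA0 U i ≤
        ⨆ k : Fin n, ((∑ j ∈ E.F k, tF1 k j) + ∑ j ∈ E.A k, tA1 k j) := fun i =>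
      le_trans (utility_le_aux E tF1 tF0 tA1 tA0 ht ht0 U i)
        (le_ciSup (f := fun k : Fin n => (∑ j ∈ E.F k, tF1 k j) + ∑ j ∈ E.A k, tA1 k j) (Set.finite_range _).bddAbove i)
    calc ∑ i, utility E tF1 tF0 tA1 tA0 U i
        ≤ ∑ _i : Fin n, ⨆ k : Fin n, ((∑ j ∈ E.F k, tF1 k j) + ∑ j ∈ E.A k, tA1 k j) :=
          Finset.sum_le_sum fun i _ => h1 i
      _ = A := by rw [hA]; simp [mul_comm]
  -- lower bound on any strategy welfare
  have hlb : ∀ x ∈ SS, B ≤ x := by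
    rintro x ⟨U, hU, rfl⟩
    obtain ⟨i0, hi0⟩ := exists_safe_aux hn E hU
    set c : Fin n → ℝ :=
      fun i => if totalThreat E U i ≤ totalSupport E U i then tF1 i i else tF0 i i with hc
    have h1 : ∑ i, c i ≤ ∑ i, utility E tF1 tF0 tA1 tA0 U i :=
      Finset.sum_le_sum fun i _ => utility_ge_aux E tF1 tF0 tA1 tA0 ht ht0 U i
    have hc0 : ∀ i, (⨅ k : Fin n, tF0 k k) ≤ c i := by
      intro i
      have := ciInf_le (f := fun k : Fin n => tF0 k k) (Set.finite_range _).bddBelow i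
      simp only [hc]
      split_ifs with h
      · exact le_trans this (ht i i).1
      · exact this
    have hci0 : (⨅ k : Fin n, tF1 k k) ≤ c i0 := by
      have := ciInf_le (f := fun k : Fin n => tF1 k k) (Set.finite_range _).bddBelow i0
      simpa [hc, if_pos hi0] using this
    have hsplit : ∑ i, c i = c i0 + ∑ i ∈ Finset.univ.erase i0, c i :=
      (Finset.add_sum_erase _ _ (Finset.mem_univ i0)).symm
    have hcard : (Finset.univ.erase i0).card = n - 1 := by
      rw [Finset.card_erase_of_mem (Finset.mem_univ i0), Finset.card_univ, Fintype.card_fin]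
    have hrest : ((n : ℝ) - 1) * (⨅ k : Fin n, tF0 k k) ≤ ∑ i ∈ Finset.univ.erase i0, c i := by
      have := Finset.card_nsmul_le_sum (Finset.univ.erase i0) c (⨅ k : Fin n, tF0 k k)
        (fun i _ => hc0 i)
      rw [hcard, nsmul_eq_mul] at this
      have hcast : ((n - 1 : ℕ) : ℝ) = (n : ℝ) - 1 := by
        rw [Nat.cast_sub hn]; norm_num
      rwa [hcast] at this
    rw [hB]
    linarith
  have hsub : SN ⊆ SS := by rintro x ⟨U, hU, rfl⟩; exact ⟨U, hU.1, rfl⟩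
  have hw₀N : (∑ i, utility E tF1 tF0 tA1 tA0 U₀ i) ∈ SN := ⟨U₀, hU₀, rfl⟩
  have hSNne : SN.Nonempty := ⟨_, hw₀N⟩
  have hSbdd : BddAbove SS := ⟨A, hub⟩
  have hS_le_A : sSup SS ≤ A := csSup_le ⟨_, hsub hw₀N⟩ hub
  have hI_ge_B : B ≤ sInf SN := le_csInf hSNne fun x hx => hlb x (hsub hx)
  have hI_le_S : sInf SN ≤ sSup SS :=
    le_trans (csInf_le ⟨B, fun x hx => hlb x (hsub hx)⟩ hw₀N) (le_csSup hSbdd (hsub hw₀N))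
  have hIpos : 0 < sInf SN := lt_of_lt_of_le hBpos hI_ge_B
  constructor
  · exact (one_le_div hIpos).mpr hI_le_S
  · exact div_le_div₀ (by linarith) hS_le_A hBpos hI_ge_B
end
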